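/- Let D be a finite distributive lattice, let L ⊆ D be a nonempty downset and M ⊆ D a nonempty upset, and let U ⊆ D be an upset. Then |U∩M|·|L| ≥ |U∩L|·|M|; equivalently, the uniform distribution on L is stochastically dominated by the uniform distribution on M. -/
import Mathlib


/-- In a finite distributive lattice, a nonempty downset `L` is stochastically
dominated by a nonempty upset `M`: for every upset `U`,
`|U∩M|·|L| ≥ |U∩L|·|M|`. -/
theorem downset_dominated_by_upset {D : Type*} [Fintype D] [DistribLattice D]
    (L M U : Set D)
    (hL : ∀ x y, x ∈ L → y ≤ x → y ∈ L) (hLne : L.Nonempty)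
    (hM : ∀ x y, x ∈ M → x ≤ y → y ∈ M) (hMne : M.Nonempty)
    (hU : ∀ x y, x ∈ U → x ≤ y → y ∈ U) :
    (U ∩ L).ncard * M.ncard ≤ (U ∩ M).ncard * L.ncard := by
  classical
  have key := four_functions_theorem_univ (β := ℕ)
    (fun a => if a ∈ U ∩ L then 1 else 0) (fun a => if a ∈ M then 1 else 0)
    (fun a => if a ∈ L then 1 else 0) (fun a => if a ∈ U ∩ M then 1 else 0)
    (fun a => by positivity) (fun a => by positivity) (fun a => by positivity)
    (fun a => by positivity) ?_
  · have hcard : ∀ S : Set D, ∑ a, (if a ∈ S then (1:ℕ) else 0) = S.ncard := by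
      intro S
      rw [Finset.sum_boole, Set.ncard_eq_toFinset_card']
      simp [Set.toFinset, Finset.filter_congr_decidable]
    beta_reduce at key
    rw [← hcard (U ∩ L), ← hcard (U ∩ M), ← hcard M, ← hcard L]
    linarith
  · intro a b
    by_cases h1 : a ∈ U ∩ L
    · by_cases h2 : b ∈ M
      · have hinf : a ⊓ b ∈ L := hL a _ h1.2 inf_le_left
        have hsup : a ⊔ b ∈ U ∩ M :=
          ⟨hU a _ h1.1 le_sup_left, hM b _ h2 le_sup_right⟩
        simp [h1, h2, hinf, hsup]
      · simp [h2]
    · simp [h1]
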